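/- Let a and b be coprime positive integers and let p be an odd prime such that p ≠ ab, p ≠ ab + 1, and p = x² + aby² for some integers x, y. Suppose that a ≠ 1 and b ≠ 1, or that a + b is not a perfect square. Then the equation aX² + bY² = (a+b)p has exactly 8 integer solutions (X, Y), namely the pairs (ε(x + by), δ(x − ay)) and (ε(x − by), δ(x + ay)) for ε, δ ∈ {1, −1}. -/

import Mathlib

private lemma sq_one_cases {c : ℤ} (h : c ^ 2 = 1) : c = 1 ∨ c = -1 := by
  have h9 : (c - 1) * (c + 1) = 0 := by linear_combination h
  rcases mul_eq_zero.mp h9 with h | h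
  · left; linarith
  · right; linarith

private lemma key_rep (a b c d : ℤ) (ha : 0 < a) (hb : 0 < b) (hcop : IsCoprime a b)
    (hcase : (a ≠ 1 ∧ b ≠ 1) ∨ ¬ IsSquare (a + b))
    (h : a * c ^ 2 + b * d ^ 2 = a + b) : (c = 1 ∨ c = -1) ∧ (d = 1 ∨ d = -1) := by
  have hc2 : 0 ≤ c ^ 2 := sq_nonneg c
  have hd2 : 0 ≤ d ^ 2 := sq_nonneg d
  rcases le_or_gt (c ^ 2) 1 with h1 | h1 <;> rcases le_or_gt (d ^ 2) 1 with h2 | h2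
  · have hc : c ^ 2 = 1 := by nlinarith
    have hd : d ^ 2 = 1 := by nlinarith
    exact ⟨sq_one_cases hc, sq_one_cases hd⟩
  · exfalso
    have hc0 : c = 0 := by
      have hcsq : c ^ 2 = 0 := by nlinarith
      exact pow_eq_zero_iff (by norm_num) |>.mp hcsq
    rw [hc0] at h
    have hb1 : b = 1 := by
      have hdvd : b ∣ a := ⟨d ^ 2 - 1, by linear_combination -h⟩
      have := hcop.isUnit_of_dvd' hdvd dvd_rfl
      rcases Int.isUnit_iff.mp this with h' | h' <;> omega
    subst hb1
    have hsq : IsSquare (a + 1) := ⟨d, by linear_combination -h⟩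
    rcases hcase with ⟨_, hb'⟩ | hns
    · exact hb' rfl
    · exact hns hsq
  · exfalso
    have hd0 : d = 0 := by
      have hdsq : d ^ 2 = 0 := by nlinarith
      exact pow_eq_zero_iff (by norm_num) |>.mp hdsq
    rw [hd0] at h
    have ha1 : a = 1 := by
      have hdvd : a ∣ b := ⟨c ^ 2 - 1, by linear_combination -h⟩
      have := hcop.isUnit_of_dvd' dvd_rfl hdvd
      rcases Int.isUnit_iff.mp this with h' | h' <;> omega
    subst ha1
    have hsq : IsSquare (1 + b) := ⟨c, by linear_combination -h⟩
    rcases hcase with ⟨ha', _⟩ | hns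
    · exact ha' rfl
    · exact hns hsq
  · exfalso; nlinarith

private lemma int_eq_one_or_prime {p : ℕ} (hp : p.Prime) {d : ℤ} (hd0 : 0 < d)
    (h : d ∣ (p : ℤ)) : d = 1 ∨ d = (p : ℤ) := by
  lift d to ℕ using hd0.le with n
  have hn : n ∣ p := by exact_mod_cast h
  rcases hp.eq_one_or_self_of_dvd n hn with h' | h'
  · left; exact_mod_cast h'
  · right; exact_mod_cast h'

private lemma prime_not_sq (p : ℕ) (hp : p.Prime) (z : ℤ) : (p : ℤ) ≠ z ^ 2 := by
  intro h
  have h2 : p = z.natAbs ^ 2 := by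
    have h3 : ((z.natAbs : ℤ)) ^ 2 = z ^ 2 := Int.natAbs_sq z
    exact_mod_cast h.trans h3.symm
  have hd : z.natAbs ∣ p := by rw [h2]; exact dvd_pow_self _ (by norm_num)
  rcases hp.eq_one_or_self_of_dvd _ hd with h' | h'
  · rw [h'] at h2; have := hp.one_lt; omega
  · rw [h'] at h2; nlinarith [hp.two_le]

private lemma no_degenerate (a b : ℤ) (ha : 0 < a) (hb : 0 < b) (p : ℕ) (hp : p.Prime)
    (hpab1 : (p : ℤ) ≠ a * b + 1) (y : ℤ) (heq : (p : ℤ) = b * (a + b) * y ^ 2) : False := by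
  have hp0 : (0 : ℤ) < p := by exact_mod_cast hp.pos
  have hy : y ≠ 0 := by
    rintro rfl
    norm_num at heq
    omega
  have hy2 : 1 ≤ y ^ 2 := by
    have h0 : y ^ 2 ≠ 0 := pow_ne_zero 2 hy
    have h1 : 0 ≤ y ^ 2 := sq_nonneg y
    omega
  have hdvd : (a + b) ∣ (p : ℤ) := ⟨b * y ^ 2, by linear_combination heq⟩
  rcases int_eq_one_or_prime hp (by linarith) hdvd with h1 | h1
  · linarith
  · rw [← h1] at heq
    have h2 : (a + b) * 1 = (a + b) * (b * y ^ 2) := by linear_combination heq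
    have hb1 : (1 : ℤ) = b * y ^ 2 := mul_left_cancel₀ (by linarith) h2
    have hbb : b = 1 := by nlinarith
    subst hbb
    apply hpab1
    linarith

private lemma aux_main (a b : ℤ) (ha : 0 < a) (hb : 0 < b) (hcop : IsCoprime a b)
    (p : ℕ) (hp : p.Prime)
    (x y X Y : ℤ) (hxy : (p : ℤ) = x ^ 2 + a * b * y ^ 2)
    (hcase : (a ≠ 1 ∧ b ≠ 1) ∨ ¬ IsSquare (a + b))
    (hps : ¬ (p : ℤ) ∣ (a + b))
    (hXY : a * X ^ 2 + b * Y ^ 2 = (a + b) * (p : ℤ))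
    (hdvd : (p : ℤ) ∣ (X * (x - a * y) - Y * (x + b * y))) :
    ∃ c d : ℤ, (c = 1 ∨ c = -1) ∧ (d = 1 ∨ d = -1) ∧
      X = c * x + b * d * y ∧ Y = d * x - a * c * y := by
  have hppr : Prime ((p : ℤ)) := Nat.prime_iff_prime_int.mp hp
  have hp0 : ((p : ℤ)) ≠ 0 := Nat.cast_ne_zero.mpr hp.pos.ne'
  have hs0 : a + b ≠ 0 := by linarith
  have huv : a * (x + b * y) ^ 2 + b * (x - a * y) ^ 2 = (a + b) * (p : ℤ) := by
    rw [hxy]; ring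
  obtain ⟨k, hk⟩ := hdvd
  have e1 : (a * X * (x + b * y) + b * Y * (x - a * y)) ^ 2
      = (p : ℤ) ^ 2 * ((a + b) ^ 2 - a * b * k ^ 2) := by
    linear_combination (a * (x + b * y) ^ 2 + b * (x - a * y) ^ 2) * hXY
      + ((a + b) * (p : ℤ)) * huv
      - a * b * (X * (x - a * y) - Y * (x + b * y) + (p : ℤ) * k) * hk
  have hzdvd : (p : ℤ) ∣ (a * X * (x + b * y) + b * Y * (x - a * y)) := by
    have h2 : (p : ℤ) ∣ (a * X * (x + b * y) + b * Y * (x - a * y)) ^ 2 :=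
      ⟨(p : ℤ) * ((a + b) ^ 2 - a * b * k ^ 2), by linear_combination e1⟩
    exact hppr.dvd_of_dvd_pow h2
  obtain ⟨m, hm⟩ := hzdvd
  have hmk : m ^ 2 + a * b * k ^ 2 = (a + b) ^ 2 := by
    have e2 : (p : ℤ) ^ 2 * (m ^ 2 + a * b * k ^ 2) = (p : ℤ) ^ 2 * ((a + b) ^ 2) := by
      linear_combination e1 - (a * X * (x + b * y) + b * Y * (x - a * y) + (p : ℤ) * m) * hm
    exact mul_left_cancel₀ (pow_ne_zero 2 hp0) e2
  have hsX : (a + b) * X = m * (x + b * y) + b * k * (x - a * y) := by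
    have e3 : (p : ℤ) * ((a + b) * X) = (p : ℤ) * (m * (x + b * y) + b * k * (x - a * y)) := by
      linear_combination (x + b * y) * hm + b * (x - a * y) * hk - X * huv
    exact mul_left_cancel₀ hp0 e3
  have hsY : (a + b) * Y = m * (x - a * y) - a * k * (x + b * y) := by
    have e4 : (p : ℤ) * ((a + b) * Y) = (p : ℤ) * (m * (x - a * y) - a * k * (x + b * y)) := by
      linear_combination (x - a * y) * hm - a * (x + b * y) * hk - Y * huv
    exact mul_left_cancel₀ hp0 e4
  have hcop_us : IsCoprime ((a + b) : ℤ) (x + b * y) := by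
    rw [Int.isCoprime_iff_gcd_eq_one]
    by_contra hg
    obtain ⟨q, hq, hqd⟩ := Nat.exists_prime_and_dvd hg
    have hq1 : (q : ℤ) ∣ (a + b) :=
      (Int.natCast_dvd_natCast.mpr hqd).trans (Int.gcd_dvd_left _ _)
    have hq2 : (q : ℤ) ∣ (x + b * y) :=
      (Int.natCast_dvd_natCast.mpr hqd).trans (Int.gcd_dvd_right _ _)
    have hqp : (q : ℤ) ∣ (p : ℤ) := by
      have hrepr : (p : ℤ) = (x + b * y) * (x - b * y) + b * y ^ 2 * (a + b) := by
        rw [hxy]; ring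
      rw [hrepr]
      exact dvd_add (hq2.mul_right _) (hq1.mul_left _)
    have hqeq : q = p := (Nat.prime_dvd_prime_iff_eq hq hp).mp (by exact_mod_cast hqp)
    subst hqeq
    exact hps hq1
  have htd : (a + b) ∣ (m - a * k) := by
    apply hcop_us.dvd_of_dvd_mul_right
    exact ⟨X - k * x, by linear_combination -hsX⟩
  obtain ⟨t, ht⟩ := htd
  have hrep : a * (k + t) ^ 2 + b * t ^ 2 = a + b := by
    have e5 : (a + b) * (a * (k + t) ^ 2 + b * t ^ 2) = (a + b) * (a + b) := by
      linear_combination hmk - (m + a * k + (a + b) * t) * ht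
    exact mul_left_cancel₀ hs0 e5
  obtain ⟨hc, hd⟩ := key_rep a b (k + t) t ha hb hcop hcase hrep
  refine ⟨k + t, t, hc, hd, ?_, ?_⟩
  · exact mul_left_cancel₀ hs0 (by linear_combination hsX + (x + b * y) * ht)
  · exact mul_left_cancel₀ hs0 (by linear_combination hsY + (x - a * y) * ht)

private lemma ncard8 (P Q R W : ℤ) (hP : P ≠ 0) (hQ : Q ≠ 0) (hR : R ≠ 0) (hW : W ≠ 0)
    (h1 : P ≠ R) (h2 : P ≠ -R) :
    ({(P, Q), (P, -Q), (-P, Q), (-P, -Q), (R, W), (R, -W), (-R, W), (-R, -W)} :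
      Set (ℤ × ℤ)).ncard = 8 := by
  rw [Set.ncard_insert_of_notMem (by
        simp only [Set.mem_insert_iff, Set.mem_singleton_iff, Prod.mk.injEq]; omega),
      Set.ncard_insert_of_notMem (by
        simp only [Set.mem_insert_iff, Set.mem_singleton_iff, Prod.mk.injEq]; omega),
      Set.ncard_insert_of_notMem (by
        simp only [Set.mem_insert_iff, Set.mem_singleton_iff, Prod.mk.injEq]; omega),
      Set.ncard_insert_of_notMem (by
        simp only [Set.mem_insert_iff, Set.mem_singleton_iff, Prod.mk.injEq]; omega),
      Set.ncard_insert_of_notMem (by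
        simp only [Set.mem_insert_iff, Set.mem_singleton_iff, Prod.mk.injEq]; omega),
      Set.ncard_insert_of_notMem (by
        simp only [Set.mem_insert_iff, Set.mem_singleton_iff, Prod.mk.injEq]; omega),
      Set.ncard_insert_of_notMem (by
        simp only [Set.mem_singleton_iff, Prod.mk.injEq]; omega),
      Set.ncard_singleton]

theorem stmt19 (a b : ℤ) (ha : 0 < a) (hb : 0 < b) (hcop : IsCoprime a b)
    (p : ℕ) (hp : p.Prime) (hpodd : Odd p)
    (hpab : (p : ℤ) ≠ a * b) (hpab1 : (p : ℤ) ≠ a * b + 1)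
    (x y : ℤ) (hxy : (p : ℤ) = x ^ 2 + a * b * y ^ 2)
    (hcase : (a ≠ 1 ∧ b ≠ 1) ∨ ¬ IsSquare (a + b)) :
    {XY : ℤ × ℤ | a * XY.1 ^ 2 + b * XY.2 ^ 2 = (a + b) * (p : ℤ)}.ncard = 8 ∧
    {XY : ℤ × ℤ | a * XY.1 ^ 2 + b * XY.2 ^ 2 = (a + b) * (p : ℤ)} =
      {XY : ℤ × ℤ | ∃ ε δ : ℤ, (ε = 1 ∨ ε = -1) ∧ (δ = 1 ∨ δ = -1) ∧
        (XY = (ε * (x + b * y), δ * (x - a * y)) ∨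
         XY = (ε * (x - b * y), δ * (x + a * y)))} := by
  have hp0 : (0 : ℤ) < (p : ℤ) := by exact_mod_cast hp.pos
  have hs0 : a + b ≠ 0 := by linarith
  have hy : y ≠ 0 := by
    rintro rfl
    exact prime_not_sq p hp x (by linear_combination hxy)
  have hx : x ≠ 0 := by
    rintro rfl
    have heq : (p : ℤ) = a * b * y ^ 2 := by linear_combination hxy
    have hdvd : (a * b) ∣ (p : ℤ) := ⟨y ^ 2, heq⟩
    rcases int_eq_one_or_prime hp (by positivity) hdvd with h1 | h1
    · exact prime_not_sq p hp y (by rw [heq, h1]; ring)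
    · exact hpab h1.symm
  have hy2 : 1 ≤ y ^ 2 := by
    have h0 : y ^ 2 ≠ 0 := pow_ne_zero 2 hy
    have h1 : 0 ≤ y ^ 2 := sq_nonneg y
    omega
  have hx2 : 1 ≤ x ^ 2 := by
    have h0 : x ^ 2 ≠ 0 := pow_ne_zero 2 hx
    have h1 : 0 ≤ x ^ 2 := sq_nonneg x
    omega
  have haby : a * b ≤ a * b * y ^ 2 := by
    nlinarith [mul_le_mul_of_nonneg_left hy2 (le_of_lt (mul_pos ha hb))]
  have hpabdvd : ¬ (p : ℤ) ∣ a * b := by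
    intro hdd
    have hle : (p : ℤ) ≤ a * b := Int.le_of_dvd (by positivity) hdd
    linarith [hxy, hx2, haby]
  have hps : ¬ (p : ℤ) ∣ (a + b) := by
    intro h
    have hple : (p : ℤ) ≤ a + b := Int.le_of_dvd (by linarith) h
    have habp : a * b ≤ (p : ℤ) := by nlinarith
    have hcases : a = 1 ∨ b = 1 ∨ (2 ≤ a ∧ 2 ≤ b) := by omega
    rcases hcases with ha1 | hb1 | ⟨ha2, hb2⟩
    · subst ha1
      obtain ⟨c, hc⟩ := h
      have hc1 : c = 1 := by nlinarith [hp.two_le, (by exact_mod_cast hp.two_le : (2:ℤ) ≤ p)]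
      apply hpab1
      rw [hc1, mul_one] at hc
      linarith
    · subst hb1
      obtain ⟨c, hc⟩ := h
      have hc1 : c = 1 := by nlinarith [(by exact_mod_cast hp.two_le : (2:ℤ) ≤ p)]
      apply hpab1
      rw [hc1, mul_one] at hc
      linarith
    · have l1 : a + b ≤ a * b := by nlinarith
      exact hpab (le_antisymm (by linarith) (by linarith))
  have hu : x + b * y ≠ 0 := by
    intro h0
    exact no_degenerate a b ha hb p hp hpab1 y (by linear_combination hxy + (x - b * y) * h0)
  have hu' : x - b * y ≠ 0 := by
    intro h0
    exact no_degenerate a b ha hb p hp hpab1 y (by linear_combination hxy + (x + b * y) * h0)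
  have hpab1' : (p : ℤ) ≠ b * a + 1 := by rw [mul_comm]; exact hpab1
  have hv : x - a * y ≠ 0 := by
    intro h0
    exact no_degenerate b a hb ha p hp hpab1' y (by linear_combination hxy + (x + a * y) * h0)
  have hw : x + a * y ≠ 0 := by
    intro h0
    exact no_degenerate b a hb ha p hp hpab1' y (by linear_combination hxy + (x - a * y) * h0)
  have hST : {XY : ℤ × ℤ | a * XY.1 ^ 2 + b * XY.2 ^ 2 = (a + b) * (p : ℤ)} =
      {XY : ℤ × ℤ | ∃ ε δ : ℤ, (ε = 1 ∨ ε = -1) ∧ (δ = 1 ∨ δ = -1) ∧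
        (XY = (ε * (x + b * y), δ * (x - a * y)) ∨
         XY = (ε * (x - b * y), δ * (x + a * y)))} := by
    ext XY
    simp only [Set.mem_setOf_eq]
    constructor
    · obtain ⟨X, Y⟩ := XY
      intro hXY
      simp only at hXY
      have hppr : Prime ((p : ℤ)) := Nat.prime_iff_prime_int.mp hp
      have huv : a * (x + b * y) ^ 2 + b * (x - a * y) ^ 2 = (a + b) * (p : ℤ) := by
        rw [hxy]; ring
      have hpa : ¬ (p : ℤ) ∣ a := fun h => hpabdvd (h.mul_right b)
      have hM : (p : ℤ) ∣ (X * (x - a * y) - Y * (x + b * y)) *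
          (X * (x - a * y) + Y * (x + b * y)) := by
        have e : a * ((X * (x - a * y) - Y * (x + b * y)) *
            (X * (x - a * y) + Y * (x + b * y))) =
            (p : ℤ) * ((a + b) * ((x - a * y) ^ 2 - Y ^ 2)) := by
          linear_combination (x - a * y) ^ 2 * hXY - Y ^ 2 * huv
        exact (hppr.dvd_mul.mp ⟨(a + b) * ((x - a * y) ^ 2 - Y ^ 2), e⟩).resolve_left hpa
      rcases hppr.dvd_mul.mp hM with hc1 | hc2
      · obtain ⟨c, d, hc, hd, hXv, hYv⟩ :=
          aux_main a b ha hb hcop p hp x y X Y hxy hcase hps hXY hc1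
        refine ⟨c, d, hc, hd, ?_⟩
        rcases hc with rfl | rfl <;> rcases hd with rfl | rfl
        · left; rw [Prod.mk.injEq]
          exact ⟨by linear_combination hXv, by linear_combination hYv⟩
        · right; rw [Prod.mk.injEq]
          exact ⟨by linear_combination hXv, by linear_combination hYv⟩
        · right; rw [Prod.mk.injEq]
          exact ⟨by linear_combination hXv, by linear_combination hYv⟩
        · left; rw [Prod.mk.injEq]
          exact ⟨by linear_combination hXv, by linear_combination hYv⟩
      · have hXY' : a * X ^ 2 + b * (-Y) ^ 2 = (a + b) * (p : ℤ) := by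
          linear_combination hXY
        have hc2' : (p : ℤ) ∣ (X * (x - a * y) - (-Y) * (x + b * y)) := by
          rw [show X * (x - a * y) - (-Y) * (x + b * y)
              = X * (x - a * y) + Y * (x + b * y) from by ring]
          exact hc2
        obtain ⟨c, d, hc, hd, hXv, hYv⟩ :=
          aux_main a b ha hb hcop p hp x y X (-Y) hxy hcase hps hXY' hc2'
        rcases hc with rfl | rfl <;> rcases hd with rfl | rfl
        · exact ⟨1, -1, Or.inl rfl, Or.inr rfl, Or.inl (by
            rw [Prod.mk.injEq]
            exact ⟨by linear_combination hXv, by linear_combination -hYv⟩)⟩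
        · exact ⟨1, 1, Or.inl rfl, Or.inl rfl, Or.inr (by
            rw [Prod.mk.injEq]
            exact ⟨by linear_combination hXv, by linear_combination -hYv⟩)⟩
        · exact ⟨-1, -1, Or.inr rfl, Or.inr rfl, Or.inr (by
            rw [Prod.mk.injEq]
            exact ⟨by linear_combination hXv, by linear_combination -hYv⟩)⟩
        · exact ⟨-1, 1, Or.inr rfl, Or.inl rfl, Or.inl (by
            rw [Prod.mk.injEq]
            exact ⟨by linear_combination hXv, by linear_combination -hYv⟩)⟩
    · rintro ⟨ε, δ, (rfl | rfl), (rfl | rfl), (rfl | rfl)⟩ <;>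
        (dsimp only; rw [hxy]; ring)
  have hTE : {XY : ℤ × ℤ | ∃ ε δ : ℤ, (ε = 1 ∨ ε = -1) ∧ (δ = 1 ∨ δ = -1) ∧
        (XY = (ε * (x + b * y), δ * (x - a * y)) ∨
         XY = (ε * (x - b * y), δ * (x + a * y)))} =
      ({(x + b * y, x - a * y), (x + b * y, -(x - a * y)),
        (-(x + b * y), x - a * y), (-(x + b * y), -(x - a * y)),
        (x - b * y, x + a * y), (x - b * y, -(x + a * y)),
        (-(x - b * y), x + a * y), (-(x - b * y), -(x + a * y))} : Set (ℤ × ℤ)) := by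
    ext XY
    simp only [Set.mem_setOf_eq, Set.mem_insert_iff, Set.mem_singleton_iff]
    constructor
    · rintro ⟨ε, δ, (rfl | rfl), (rfl | rfl), (rfl | rfl)⟩ <;> norm_num
    · rintro (rfl | rfl | rfl | rfl | rfl | rfl | rfl | rfl)
      · exact ⟨1, 1, Or.inl rfl, Or.inl rfl, Or.inl (by norm_num)⟩
      · exact ⟨1, -1, Or.inl rfl, Or.inr rfl, Or.inl (by norm_num)⟩
      · exact ⟨-1, 1, Or.inr rfl, Or.inl rfl, Or.inl (by norm_num)⟩
      · exact ⟨-1, -1, Or.inr rfl, Or.inr rfl, Or.inl (by norm_num)⟩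
      · exact ⟨1, 1, Or.inl rfl, Or.inl rfl, Or.inr (by norm_num)⟩
      · exact ⟨1, -1, Or.inl rfl, Or.inr rfl, Or.inr (by norm_num)⟩
      · exact ⟨-1, 1, Or.inr rfl, Or.inl rfl, Or.inr (by norm_num)⟩
      · exact ⟨-1, -1, Or.inr rfl, Or.inr rfl, Or.inr (by norm_num)⟩
  refine ⟨?_, hST⟩
  rw [hST, hTE]
  exact ncard8 (x + b * y) (x - a * y) (x - b * y) (x + a * y) hu hv hu' hw
    (by intro h; exact (mul_ne_zero (ne_of_gt hb) hy) (by linarith))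
    (by intro h; exact hx (by linarith))
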